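/- Let p be a probability vector on a finite set S' containing g, and let V : S' → ℝ with V(g) = 0. Define the perturbed probability vector p̃ = (n/(n+1))·p + (1/(n+1))·δ_g for a nonnegative integer n (where in fact p is P̂(·|s,a) and n = n(s,a)). Then |p̃·V − p·V| ≤ ‖V‖_∞/(n+1), and |Var_{p̃}(V) − Var_p(V)| ≤ 2‖V‖_∞²·(S+1)/(n+1), where Var_q(V) = q·V² − (q·V)² and S+1 = |S'|. -/

import Mathlib

/-- Perturbing a probability vector by shifting `1/(n+1)` mass to the goal state changes
expectations of `V` (with `V g = 0`) by at most `‖V‖_∞/(n+1)` and variances by at most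
`2‖V‖_∞² |S'|/(n+1)`. -/
theorem stmt_4 {S' : Type*} [Fintype S'] [DecidableEq S'] (g : S')
    (p : S' → ℝ) (hp0 : ∀ s, 0 ≤ p s) (hp1 : ∑ s, p s = 1)
    (V : S' → ℝ) (hVg : V g = 0)
    (n : ℕ) (ptil : S' → ℝ)
    (hptil : ∀ s, ptil s = ((n : ℝ) / ((n : ℝ) + 1)) * p s
        + (if s = g then (1 : ℝ) else 0) / ((n : ℝ) + 1))
    (B : ℝ) (hB : ∀ s, |V s| ≤ B) :
    |(∑ s, ptil s * V s) - ∑ s, p s * V s| ≤ B / ((n : ℝ) + 1) ∧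
    |((∑ s, ptil s * (V s) ^ 2) - (∑ s, ptil s * V s) ^ 2)
        - ((∑ s, p s * (V s) ^ 2) - (∑ s, p s * V s) ^ 2)|
      ≤ 2 * B ^ 2 * (Fintype.card S' : ℝ) / ((n : ℝ) + 1) := by
  set a : ℝ := (n : ℝ) + 1 with ha_def
  have ha : (0 : ℝ) < a := by positivity
  have hB0 : 0 ≤ B := le_trans (abs_nonneg _) (hB g)
  have key : ∀ W : S' → ℝ, W g = 0 →
      ∑ s, ptil s * W s = ((n : ℝ) / a) * ∑ s, p s * W s := by
    intro W hW
    have h : ∀ s, ptil s * W s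
        = ((n : ℝ) / a) * (p s * W s) + (if s = g then W s else 0) / a := by
      intro s
      rw [hptil s]
      by_cases h : s = g
      · simp [h, hW]
      · simp [h]; ring
    simp only [h, Finset.sum_add_distrib, ← Finset.sum_div, Finset.sum_ite_eq',
      Finset.mem_univ, if_true, hW, zero_div, add_zero, ← Finset.mul_sum]
  have h1 := key V hVg
  have h2 : ∑ s, ptil s * V s ^ 2 = ((n : ℝ) / a) * ∑ s, p s * V s ^ 2 :=
    key (fun s => V s ^ 2) (by simp [hVg])
  set E : ℝ := ∑ s, p s * V s
  set E2 : ℝ := ∑ s, p s * V s ^ 2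
  have hE : |E| ≤ B := by
    calc |E| ≤ ∑ s, |p s * V s| := Finset.abs_sum_le_sum_abs _ _
    _ ≤ ∑ s, p s * B := by
        apply Finset.sum_le_sum
        intro s _
        rw [abs_mul, abs_of_nonneg (hp0 s)]
        exact mul_le_mul_of_nonneg_left (hB s) (hp0 s)
    _ = B := by rw [← Finset.sum_mul, hp1, one_mul]
  have hE2 : |E2| ≤ B ^ 2 := by
    calc |E2| ≤ ∑ s, |p s * V s ^ 2| := Finset.abs_sum_le_sum_abs _ _
    _ ≤ ∑ s, p s * B ^ 2 := by
        apply Finset.sum_le_sum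
        intro s _
        rw [abs_mul, abs_of_nonneg (hp0 s)]
        rw [abs_pow]
        exact mul_le_mul_of_nonneg_left (pow_le_pow_left₀ (abs_nonneg _) (hB s) 2) (hp0 s)
    _ = B ^ 2 := by rw [← Finset.sum_mul, hp1, one_mul]
  constructor
  · rw [h1]
    have : (n : ℝ) / a * E - E = -(E / a) := by
      field_simp
      simp only [ha_def]; ring
    rw [this, abs_neg, abs_div, abs_of_pos ha]
    exact div_le_div_of_nonneg_right hE ha.le
  · rw [h1, h2]
    have hcard : 1 ≤ Fintype.card S' := Fintype.card_pos_iff.mpr ⟨g⟩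
    rcases eq_or_lt_of_le hcard with hc1 | hc2
    · -- card = 1 : every element equals g, V ≡ 0
      obtain ⟨x, hx⟩ := Fintype.card_eq_one_iff.mp hc1.symm
      have hV0 : ∀ s, V s = 0 := fun s => by rw [(hx s).trans (hx g).symm, hVg]
      have hE0 : E = 0 := by simp [E, hV0]
      have hE20 : E2 = 0 := by simp [E2, hV0]
      have hpos : (0:ℝ) ≤ 2 * B ^ 2 * (Fintype.card S' : ℝ) / a := by positivity
      simpa [hE0, hE20] using hpos
    · -- card ≥ 2
      have hexpr : (n : ℝ) / a * E2 - ((n : ℝ) / a * E) ^ 2 - (E2 - E ^ 2)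
          = -(E2 / a) + E ^ 2 * ((2 * (n : ℝ) + 1) / a ^ 2) := by
        have hane : a ≠ 0 := ne_of_gt ha
        field_simp
        simp only [ha_def]; ring
      rw [hexpr]
      have step1 : |-(E2 / a) + E ^ 2 * ((2 * (n : ℝ) + 1) / a ^ 2)|
          ≤ B ^ 2 / a + B ^ 2 * (2 / a) := by
        refine (abs_add_le _ _).trans ?_
        gcongr
        · rw [abs_neg, abs_div, abs_of_pos ha]
          exact div_le_div_of_nonneg_right hE2 ha.le
        · rw [abs_mul, abs_of_nonneg (by positivity : (0:ℝ) ≤ (2 * (n : ℝ) + 1) / a ^ 2),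
            abs_pow]
          have h1' : |E| ^ 2 ≤ B ^ 2 := pow_le_pow_left₀ (abs_nonneg _) hE 2
          have h2' : (2 * (n : ℝ) + 1) / a ^ 2 ≤ 2 / a := by
            rw [div_le_div_iff₀ (by positivity) ha]
            nlinarith
          exact mul_le_mul h1' h2' (by positivity) (by positivity)
      refine step1.trans ?_
      have hc : (2 : ℝ) ≤ (Fintype.card S' : ℝ) := by exact_mod_cast hc2
      have heq : B ^ 2 / a + B ^ 2 * (2 / a) = 3 * B ^ 2 / a := by ring
      rw [heq]
      exact (div_le_div_iff_of_pos_right ha).mpr (by nlinarith)
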